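/- arXiv:2412.17380 — 2 statements merged into one kernel-verified Lean document; each statement's English description precedes it below -/
import Mathlib

section
/- Let H be a Hilbert space, ℳ : H → H a nonnegative self-adjoint bounded operator, β > 0, ε > 0, α ∈ (0,1], N ∈ ℕ, and P_N an orthogonal projection on H. Suppose that inf{⟨ℳξ, ξ⟩ : ‖ξ‖ = 1, ‖P_N ξ‖ ≥ α} ≥ ε. Then for every φ ∈ H, β ‖P_N (βI + ℳ)^{-1} φ‖ ≤ (max(α, sqrt(β/ε))) ‖φ‖. -/
open ContinuousLinearMap

/-- Regularized-inverse bound (Lemma 5.14 of Hairer–Mattingly 2011): if `ℳ` is a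
nonnegative self-adjoint operator, `P` an orthogonal projection, and
`⟨ℳξ,ξ⟩ ≥ ε` for all unit `ξ` with `‖Pξ‖ ≥ α`, then for every `φ`,
`β ‖P (βI + ℳ)⁻¹ φ‖ ≤ max(α, √(β/ε)) ‖φ‖`. -/
theorem regularized_inverse_bound
    {H : Type*} [NormedAddCommGroup H] [InnerProductSpace ℝ H] [CompleteSpace H]
    (ℳ : H →L[ℝ] H) (hℳ : ℳ.IsPositive)
    (P : H →L[ℝ] H) (hP_proj : P.comp P = P) (hP_sa : IsSelfAdjoint P)
    (β ε α : ℝ) (hβ : 0 < β) (hε : 0 < ε) (hα0 : 0 < α) (hα1 : α ≤ 1)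
    (hlow : ∀ ξ : H, ‖ξ‖ = 1 → α ≤ ‖P ξ‖ → ε ≤ (inner ℝ (ℳ ξ) ξ : ℝ))
    (R : H →L[ℝ] H)
    (hR : (β • ContinuousLinearMap.id ℝ H + ℳ).comp R = ContinuousLinearMap.id ℝ H)
    (hR' : R.comp (β • ContinuousLinearMap.id ℝ H + ℳ) = ContinuousLinearMap.id ℝ H) :
    ∀ φ : H, β * ‖P (R φ)‖ ≤ max α (Real.sqrt (β / ε)) * ‖φ‖ := by
  intro φ
  set x := R φ with hx
  have hmax0 : 0 ≤ max α (Real.sqrt (β / ε)) := le_trans hα0.le (le_max_left _ _)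
  rcases eq_or_ne x 0 with hx0 | hx0
  · rw [hx0]; simp [mul_nonneg hmax0 (norm_nonneg φ)]
  have hxn : 0 < ‖x‖ := norm_pos_iff.mpr hx0
  -- φ = β x + ℳ x
  have hφ : β • x + ℳ x = φ := by
    have := congrArg (fun T : H →L[ℝ] H => T φ) hR
    simpa using this
  set m : ℝ := inner ℝ (ℳ x) x with hm
  have hm0 : 0 ≤ m := by
    have := hℳ.inner_nonneg_left x
    simpa [hm] using this
  have hφx : (inner ℝ φ x : ℝ) = β * ‖x‖ ^ 2 + m := by
    rw [← hφ, inner_add_left, real_inner_smul_left, real_inner_self_eq_norm_sq]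
  have hin : (inner ℝ φ x : ℝ) ≤ ‖φ‖ * ‖x‖ := real_inner_le_norm φ x
  have hβx : β * ‖x‖ ≤ ‖φ‖ := by
    have h1 : β * ‖x‖ * ‖x‖ ≤ ‖φ‖ * ‖x‖ := by nlinarith [hφx, hin, hm0]
    exact le_of_mul_le_mul_right h1 hxn
  -- ‖P x‖ ≤ ‖x‖
  have hPle : ‖P x‖ ≤ ‖x‖ := by
    have hsq : ‖P x‖ ^ 2 = (inner ℝ (P x) x : ℝ) := by
      have h2 : P (P x) = P x := by
        have := congrArg (fun T : H →L[ℝ] H => T x) hP_proj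
        simpa using this
      have hadj : ContinuousLinearMap.adjoint P = P :=
        ContinuousLinearMap.isSelfAdjoint_iff'.mp hP_sa
      calc ‖P x‖ ^ 2 = (inner ℝ (P x) (P x) : ℝ) := (real_inner_self_eq_norm_sq _).symm
        _ = (inner ℝ (ContinuousLinearMap.adjoint P x) (P x) : ℝ) := by rw [hadj]
        _ = (inner ℝ x (P (P x)) : ℝ) := ContinuousLinearMap.adjoint_inner_left _ _ _
        _ = (inner ℝ x (P x) : ℝ) := by rw [h2]
        _ = (inner ℝ (P x) x : ℝ) := real_inner_comm _ _
    have h3 : (inner ℝ (P x) x : ℝ) ≤ ‖P x‖ * ‖x‖ := real_inner_le_norm _ _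
    nlinarith [norm_nonneg (P x), norm_nonneg x]
  by_cases hc : ‖P x‖ < α * ‖x‖
  · calc β * ‖P x‖ ≤ β * (α * ‖x‖) := by
          exact mul_le_mul_of_nonneg_left hc.le hβ.le
      _ = α * (β * ‖x‖) := by ring
      _ ≤ α * ‖φ‖ := mul_le_mul_of_nonneg_left hβx hα0.le
      _ ≤ max α (Real.sqrt (β / ε)) * ‖φ‖ := by
          exact mul_le_mul_of_nonneg_right (le_max_left _ _) (norm_nonneg φ)
  · push_neg at hc
    -- apply hlow to normalized vector
    set η := ‖x‖⁻¹ • x with hη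
    have hηn : ‖η‖ = 1 := by
      rw [hη, norm_smul, norm_inv, norm_norm, inv_mul_cancel₀ hxn.ne']
    have hPη : α ≤ ‖P η‖ := by
      rw [hη, map_smul, norm_smul, norm_inv, norm_norm]
      rw [← mul_le_mul_iff_right₀ hxn]
      calc ‖x‖ * α = α * ‖x‖ := mul_comm _ _
        _ ≤ ‖P x‖ := hc
        _ = ‖x‖ * (‖x‖⁻¹ * ‖P x‖) := by field_simp
    have hεm : ε * ‖x‖ ^ 2 ≤ m := by
      have h4 := hlow η hηn hPη
      have h5 : (inner ℝ (ℳ η) η : ℝ) = ‖x‖⁻¹ ^ 2 * m := by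
        rw [hη, map_smul, real_inner_smul_left, real_inner_smul_right, hm]
        ring
      rw [h5] at h4
      have := mul_le_mul_of_nonneg_left h4 (sq_nonneg ‖x‖)
      calc ε * ‖x‖ ^ 2 = ‖x‖ ^ 2 * ε := mul_comm _ _
        _ ≤ ‖x‖ ^ 2 * (‖x‖⁻¹ ^ 2 * m) := this
        _ = m := by field_simp
    have hεx : ε * ‖x‖ ≤ ‖φ‖ := by
      have h6 : m ≤ ‖φ‖ * ‖x‖ := by nlinarith [hφx, hin, sq_nonneg ‖x‖]
      have h7 : ε * ‖x‖ * ‖x‖ ≤ ‖φ‖ * ‖x‖ := by nlinarith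
      exact le_of_mul_le_mul_right h7 hxn
    have key : β * ‖x‖ ≤ Real.sqrt (β / ε) * ‖φ‖ := by
      have hsq : (β * ‖x‖) ^ 2 ≤ (β / ε) * ‖φ‖ ^ 2 := by
        have : (β * ‖x‖) ^ 2 = (β / ε) * ((β * ‖x‖) * (ε * ‖x‖)) := by
          field_simp
        rw [this]
        have h8 : (β * ‖x‖) * (ε * ‖x‖) ≤ ‖φ‖ * ‖φ‖ :=
          mul_le_mul hβx hεx (by positivity) (norm_nonneg φ)
        have : (β / ε) * ((β * ‖x‖) * (ε * ‖x‖)) ≤ (β / ε) * (‖φ‖ * ‖φ‖) :=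
          mul_le_mul_of_nonneg_left h8 (by positivity)
        nlinarith
      have := Real.sqrt_le_sqrt hsq
      rwa [Real.sqrt_sq (by positivity), Real.sqrt_mul (by positivity),
        Real.sqrt_sq (norm_nonneg φ)] at this
    calc β * ‖P x‖ ≤ β * ‖x‖ := mul_le_mul_of_nonneg_left hPle hβ.le
      _ ≤ Real.sqrt (β / ε) * ‖φ‖ := key
      _ ≤ max α (Real.sqrt (β / ε)) * ‖φ‖ :=
          mul_le_mul_of_nonneg_right (le_max_right _ _) (norm_nonneg φ)
end

section
/- Let Z₀ ⊂ ℤ² \ {(0,0)} be a finite symmetric set (Z₀ = −Z₀) that generates ℤ² as a group and contains two non-parallel vectors m, n with |m| ≠ |n|. Define recursively Z_n = { k + j : j ∈ Z₀, k ∈ Z_{n−1}, ⟨k^⊥, j⟩ ≠ 0, |k| ≠ |j| } where k^⊥ = (k₂, −k₁). Then ∪_{n≥1} Z_n = ℤ² \ {(0,0)}. -/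
namespace LatProp

def cross (k j : ℤ × ℤ) : ℤ := k.2 * j.1 - k.1 * j.2
def ip (k j : ℤ × ℤ) : ℤ := k.1 * j.1 + k.2 * j.2
def Qn (k : ℤ × ℤ) : ℤ := k.1 ^ 2 + k.2 ^ 2
def sc (a : ℤ) (x : ℤ × ℤ) : ℤ × ℤ := (a * x.1, a * x.2)

lemma add_fst (x y : ℤ × ℤ) : (x + y).1 = x.1 + y.1 := rfl
lemma add_snd (x y : ℤ × ℤ) : (x + y).2 = x.2 + y.2 := rfl
lemma neg_fst (x : ℤ × ℤ) : (-x).1 = -x.1 := rfl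
lemma neg_snd (x : ℤ × ℤ) : (-x).2 = -x.2 := rfl
lemma sub_fst (x y : ℤ × ℤ) : (x - y).1 = x.1 - y.1 := rfl
lemma sub_snd (x y : ℤ × ℤ) : (x - y).2 = x.2 - y.2 := rfl

lemma lagrange (x y : ℤ × ℤ) : ip x y ^ 2 + cross x y ^ 2 = Qn x * Qn y := by
  simp only [ip, cross, Qn]; ring

lemma Qn_add (x y : ℤ × ℤ) : Qn (x + y) = Qn x + 2 * ip x y + Qn y := by
  simp only [Qn, ip, add_fst, add_snd]; ring

lemma Qn_add_sc (x : ℤ × ℤ) (a : ℤ) (v : ℤ × ℤ) :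
    Qn (x + sc a v) = Qn x + 2 * a * ip x v + a ^ 2 * Qn v := by
  simp only [Qn, ip, sc, add_fst, add_snd]; ring

lemma cross_add_sc (x : ℤ × ℤ) (a : ℤ) (v w : ℤ × ℤ) :
    cross (x + sc a v) w = cross x w + a * cross v w := by
  simp only [cross, sc, add_fst, add_snd]; ring

lemma cross_add_left (x y w : ℤ × ℤ) : cross (x + y) w = cross x w + cross y w := by
  simp only [cross, add_fst, add_snd]; ring

lemma cross_sub_left (x y w : ℤ × ℤ) : cross (x - y) w = cross x w - cross y w := by
  simp only [cross, sub_fst, sub_snd]; ring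

lemma cross_neg_left (x w : ℤ × ℤ) : cross (-x) w = -cross x w := by
  simp only [cross, neg_fst, neg_snd]; ring

lemma cross_neg_right (x w : ℤ × ℤ) : cross x (-w) = -cross x w := by
  simp only [cross, neg_fst, neg_snd]; ring

lemma lpCrossSelf (v : ℤ × ℤ) : cross v v = 0 := by simp only [cross]; ring

lemma lpCrossAC (x y : ℤ × ℤ) : cross x y = -cross y x := by
  simp only [cross]; ring

lemma cross_zero_left (w : ℤ × ℤ) : cross 0 w = 0 := by
  simp only [cross, Prod.fst_zero, Prod.snd_zero]; ring

lemma ip_neg_right (x v : ℤ × ℤ) : ip x (-v) = -ip x v := by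
  simp only [ip, neg_fst, neg_snd]; ring

lemma Qn_neg (v : ℤ × ℤ) : Qn (-v) = Qn v := by
  simp only [Qn, neg_fst, neg_snd]; ring

lemma Qn_nonneg (x : ℤ × ℤ) : 0 ≤ Qn x := by simp only [Qn]; positivity

lemma Qn_pos (x : ℤ × ℤ) (hx : x ≠ 0) : 1 ≤ Qn x := by
  rcases eq_or_ne x.1 0 with h1 | h1
  · have h2 : x.2 ≠ 0 := by
      intro h2; exact hx (Prod.ext h1 h2)
    have : 1 ≤ x.2 ^ 2 := by
      have := Int.one_le_abs (by exact h2)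
      nlinarith [abs_nonneg x.2, sq_abs x.2]
    simp only [Qn]; nlinarith [sq_nonneg x.1]
  · have : 1 ≤ x.1 ^ 2 := by
      have := Int.one_le_abs (by exact h1)
      nlinarith [abs_nonneg x.1, sq_abs x.1]
    simp only [Qn]; nlinarith [sq_nonneg x.2]

lemma Qn_add_le (x y : ℤ × ℤ) : Qn (x + y) ≤ 2 * Qn x + 2 * Qn y := by
  simp only [Qn, add_fst, add_snd]
  nlinarith [sq_nonneg (x.1 - y.1), sq_nonneg (x.2 - y.2)]

/-- key norm lower bound for far points after a bounded step -/
lemma normlb (x v : ℤ × ℤ) (T W : ℤ) (hT : 0 ≤ T) (hW : 0 ≤ W)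
    (hx : 2 * T + 2 * W + 1 ≤ Qn x) (hv : Qn v ≤ W) : T < Qn (x + v) := by
  have hlag := lagrange x v
  have hc2 : 0 ≤ cross x v ^ 2 := sq_nonneg _
  have hQv : 0 ≤ Qn v := Qn_nonneg v
  have hQx : 0 ≤ Qn x := Qn_nonneg x
  rw [Qn_add]
  set S := Qn x with hS
  set w := Qn v with hw
  set t := ip x v with ht
  by_contra hF
  push_neg at hF
  have h2t : S + w - T ≤ -2 * t := by linarith
  have hpos : 0 ≤ S + w - T := by linarith
  have h3 : (S + w - T) ^ 2 ≤ 4 * t ^ 2 := by nlinarith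
  have h4 : t ^ 2 ≤ S * w := by nlinarith
  nlinarith [sq_nonneg (T - w), sq_nonneg (S - w - T)]

/-- if |cross x w| > NB then Qn x > NB (assuming Qn w ≤ NB) -/
lemma Qn_gt_of_cross (x w : ℤ × ℤ) (NB : ℤ) (h1 : 1 ≤ NB)
    (hw : Qn w ≤ NB) (hc : (NB + 1) ^ 2 ≤ cross x w ^ 2) : NB < Qn x := by
  by_contra h
  push_neg at h
  have hlag := lagrange x w
  have := sq_nonneg (ip x w)
  nlinarith [Qn_nonneg x, Qn_nonneg w]

/-- two vectors parallel to a common nonzero vector are parallel -/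
lemma parallel_trans (q j u : ℤ × ℤ) (hj : j ≠ 0) (hqj : cross q j = 0)
    (hqu : cross q u ≠ 0) : cross u j ≠ 0 := by
  intro huj
  simp only [cross] at hqj huj hqu
  rcases eq_or_ne j.1 0 with h1 | h1
  · have h2 : j.2 ≠ 0 := fun h2 => hj (Prod.ext h1 h2)
    apply hqu
    have e1 : j.2 * (q.2 * u.1 - q.1 * u.2) = 0 := by linear_combination u.2 * hqj - q.2 * huj
    rcases mul_eq_zero.1 e1 with h | h
    · exact absurd h h2
    · linarith
  · apply hqu
    have e1 : j.1 * (q.2 * u.1 - q.1 * u.2) = 0 := by linear_combination u.1 * hqj - q.1 * huj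
    rcases mul_eq_zero.1 e1 with h | h
    · exact absurd h h1
    · linarith

lemma notboth (m n x : ℤ × ℤ) (hpar : m.1 * n.2 - m.2 * n.1 ≠ 0) (hx : x ≠ 0)
    (h1 : cross x m = 0) (h2 : cross x n = 0) : False := by
  simp only [cross] at h1 h2
  have e1 : x.1 * (m.1 * n.2 - m.2 * n.1) = 0 := by linear_combination (-m.1) * h2 + n.1 * h1
  have e2 : x.2 * (m.1 * n.2 - m.2 * n.1) = 0 := by linear_combination (-m.2) * h2 + n.2 * h1
  apply hx
  apply Prod.ext
  · rcases mul_eq_zero.1 e1 with h | h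
    · simpa using h
    · exact absurd h hpar
  · rcases mul_eq_zero.1 e2 with h | h
    · simpa using h
    · exact absurd h hpar

lemma exists_list_of_mem (S : Set (ℤ × ℤ)) (hs : ∀ k ∈ S, -k ∈ S) (x : ℤ × ℤ)
    (hx : x ∈ AddSubgroup.closure S) :
    ∃ l : List (ℤ × ℤ), (∀ y ∈ l, y ∈ S) ∧ l.sum = x := by
  induction hx using AddSubgroup.closure_induction with
  | mem y hy => exact ⟨[y], by simpa using hy, by simp⟩
  | zero => exact ⟨[], by simp, by simp⟩
  | add y z _ _ ihy ihz =>
      obtain ⟨l1, h1, hs1⟩ := ihy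
      obtain ⟨l2, h2, hs2⟩ := ihz
      refine ⟨l1 ++ l2, ?_, by simp [hs1, hs2]⟩
      intro w hw
      rcases List.mem_append.1 hw with h | h
      · exact h1 w h
      · exact h2 w h
  | neg y _ ihy =>
      obtain ⟨l, h1, hs1⟩ := ihy
      refine ⟨l.map (fun z => -z), ?_, ?_⟩
      · intro w hw
        obtain ⟨z, hz, rfl⟩ := List.mem_map.1 hw
        exact hs z (h1 z hz)
      · rw [← hs1]
        clear h1 hs1
        induction l with
        | nil => simp
        | cons a l ih =>
            simp only [List.map_cons, List.sum_cons, ih]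
            abel

lemma mem_span_pair (m n x : ℤ × ℤ) (hx : x ∈ AddSubgroup.closure ({m, n} : Set (ℤ × ℤ))) :
    ∃ a b : ℤ, x = sc a m + sc b n := by
  induction hx using AddSubgroup.closure_induction with
  | mem y hy =>
      rcases hy with h | h
      · exact ⟨1, 0, by rw [h]; apply Prod.ext <;> simp [sc]⟩
      · exact ⟨0, 1, by rw [h]; apply Prod.ext <;> simp [sc]⟩
  | zero => exact ⟨0, 0, by apply Prod.ext <;> simp [sc]⟩
  | add y z _ _ ihy ihz =>
      obtain ⟨a1, b1, rfl⟩ := ihy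
      obtain ⟨a2, b2, rfl⟩ := ihz
      exact ⟨a1 + a2, b1 + b2, by
        apply Prod.ext <;> simp only [sc, add_fst, add_snd] <;> ring⟩
  | neg y _ ihy =>
      obtain ⟨a, b, rfl⟩ := ihy
      exact ⟨-a, -b, by
        apply Prod.ext <;> simp only [sc, add_fst, add_snd, neg_fst, neg_snd] <;> ring⟩

lemma sc_zero (v : ℤ × ℤ) : sc 0 v = 0 := by
  apply Prod.ext <;> simp [sc]

lemma add_sc_step (k : ℤ × ℤ) (a : ℤ) (v : ℤ × ℤ) :
    (k + sc a v) + v = k + sc (a + 1) v := by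
  apply Prod.ext <;> simp only [sc, add_fst, add_snd] <;> ring

end LatProp

set_option maxHeartbeats 2000000 in
open LatProp in
/-- Combinatorial propagation (Proposition 4.4 of Hairer–Mattingly 2006): if
`Z₀ ⊂ ℤ²∖{0}` is a finite symmetric generator of `ℤ²` containing two non-parallel vectors
`m, n` with `|m| ≠ |n|`, and `Z_{k+1} = {k + j : j ∈ Z₀, k ∈ Z_k, ⟨k^⊥, j⟩ ≠ 0, |k| ≠ |j|}`,
then `⋃_{k ≥ 1} Z_k = ℤ²∖{0}`. -/
theorem lattice_propagation (Z₀ : Set (ℤ × ℤ)) (hfin : Z₀.Finite)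
    (h0 : (0, 0) ∉ Z₀) (hsymm : ∀ k ∈ Z₀, -k ∈ Z₀)
    (hgen : AddSubgroup.closure Z₀ = ⊤)
    (m n : ℤ × ℤ) (hm : m ∈ Z₀) (hn : n ∈ Z₀)
    (hpar : m.1 * n.2 - m.2 * n.1 ≠ 0)
    (hnorm : m.1 ^ 2 + m.2 ^ 2 ≠ n.1 ^ 2 + n.2 ^ 2)
    (Z : ℕ → Set (ℤ × ℤ)) (hZ0 : Z 0 = Z₀)
    (hrec : ∀ N : ℕ, Z (N + 1) =
      {p | ∃ j ∈ Z₀, ∃ k ∈ Z N,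
        k.2 * j.1 - k.1 * j.2 ≠ 0 ∧ k.1 ^ 2 + k.2 ^ 2 ≠ j.1 ^ 2 + j.2 ^ 2 ∧ p = k + j}) :
    (⋃ N : ℕ, Z (N + 1)) = {p : ℤ × ℤ | p ≠ (0, 0)} := by
  classical
  -- basic facts
  have hzz : ((0, 0) : ℤ × ℤ) = 0 := rfl
  have hm0 : m ≠ 0 := fun h => h0 (by rw [hzz, ← h]; exact hm)
  have hn0 : n ≠ 0 := fun h => h0 (by rw [hzz, ← h]; exact hn)
  have hcmn : cross m n ≠ 0 := by
    simp only [cross]; intro h; apply hpar; linarith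
  have hnormQ : Qn m ≠ Qn n := hnorm
  -- bound NB on squared norms of elements of Z₀
  obtain ⟨NB, hNB1, hNBb⟩ : ∃ NB : ℤ, 1 ≤ NB ∧ ∀ j ∈ Z₀, Qn j ≤ NB := by
    obtain ⟨C, hC⟩ := (hfin.image Qn).bddAbove
    refine ⟨max C 1, le_max_right _ _, fun j hj => ?_⟩
    exact le_trans (hC ⟨j, hj, rfl⟩) (le_max_left _ _)
  have hQm : Qn m ≤ NB := hNBb m hm
  have hQn : Qn n ≤ NB := hNBb n hn
  -- the one-step lemma
  have hstep : ∀ k j : ℤ × ℤ, (∃ N, k ∈ Z N) → j ∈ Z₀ → cross k j ≠ 0 → Qn k ≠ Qn j →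
      ∃ N, k + j ∈ Z (N + 1) := by
    rintro k j ⟨N, hk⟩ hj hc hq
    refine ⟨N, ?_⟩
    rw [hrec]
    exact ⟨j, hj, k, hk, hc, hq, rfl⟩
  have hR'R : ∀ x : ℤ × ℤ, (∃ N, x ∈ Z (N + 1)) → ∃ N, x ∈ Z N := by
    rintro x ⟨N, h⟩; exact ⟨N + 1, h⟩
  have hRne : ∀ x : ℤ × ℤ, (∃ N, x ∈ Z N) → x ≠ 0 := by
    rintro x ⟨N, hx⟩ rfl
    cases N with
    | zero => rw [hZ0] at hx; exact h0 hx
    | succ N =>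
        rw [hrec] at hx
        obtain ⟨j, hj, k, hk, hc, hq, hsum⟩ := hx
        apply hc
        have hkj : k = -j := by
          have := hsum.symm
          apply eq_neg_of_add_eq_zero_left this
        rw [hkj, neg_snd, neg_fst]; ring
  -- the ray lemma (natural number version)
  have hrayN : ∀ (k v : ℤ × ℤ), (∃ N, k ∈ Z N) → v ∈ Z₀ → cross k v ≠ 0 →
      ∀ t : ℕ, (∀ i : ℕ, i < t → Qn (k + sc (i : ℤ) v) ≠ Qn v) →
      (∃ N, k + sc (t : ℤ) v ∈ Z N) ∧ (1 ≤ t → ∃ N, k + sc (t : ℤ) v ∈ Z (N + 1)) := by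
    intro k v hk hv hc t
    induction t with
    | zero =>
        intro _
        constructor
        · rw [Nat.cast_zero, sc_zero, add_zero]; exact hk
        · intro h; exact absurd h (by omega)
    | succ s ih =>
        intro hcond
        have ih' := ih (fun i hi => hcond i (by omega))
        have hQ := hcond s (by omega)
        have hcs : cross (k + sc (s : ℤ) v) v ≠ 0 := by
          rw [cross_add_sc, lpCrossSelf, mul_zero, add_zero]; exact hc
        have hstep' := hstep (k + sc (s : ℤ) v) v ih'.1 hv hcs hQ
        have heq : (k + sc (s : ℤ) v) + v = k + sc ((s + 1 : ℕ) : ℤ) v := by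
          push_cast
          rw [add_sc_step]
        rw [heq] at hstep'
        exact ⟨hR'R _ hstep', fun _ => hstep'⟩
  -- the ray lemma (integer version)
  have hrayZ : ∀ (k v : ℤ × ℤ), (∃ N, k ∈ Z N) → v ∈ Z₀ → cross k v ≠ 0 →
      ∀ t : ℤ, 0 ≤ t → (∀ i : ℤ, 0 ≤ i → i < t → Qn (k + sc i v) ≠ Qn v) →
      (∃ N, k + sc t v ∈ Z N) ∧ (1 ≤ t → ∃ N, k + sc t v ∈ Z (N + 1)) := by
    intro k v hk hv hc t ht hcond
    have hcast : ((t.toNat : ℕ) : ℤ) = t := Int.toNat_of_nonneg ht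
    have h := hrayN k v hk hv hc t.toNat (fun i hi => hcond (i : ℤ) (by positivity) (by omega))
    rw [hcast] at h
    exact ⟨h.1, fun h1 => h.2 (by omega)⟩
  -- membership in the lattice L generated by m and n
  have hLm : m ∈ AddSubgroup.closure ({m, n} : Set (ℤ × ℤ)) :=
    AddSubgroup.subset_closure (by simp)
  have hLn : n ∈ AddSubgroup.closure ({m, n} : Set (ℤ × ℤ)) :=
    AddSubgroup.subset_closure (by simp)
  have hLsc : ∀ (a : ℤ) (x : ℤ × ℤ), x ∈ AddSubgroup.closure ({m, n} : Set (ℤ × ℤ)) →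
      sc a x ∈ AddSubgroup.closure ({m, n} : Set (ℤ × ℤ)) := by
    intro a x hx
    have : sc a x = a • x := by
      apply Prod.ext <;> simp [sc]
    rw [this]
    exact zsmul_mem hx a
  -- base case : far reachable points inside L
  have hC0 : ∀ T : ℤ, ∃ q, (∃ N, q ∈ Z N) ∧ q ∈ AddSubgroup.closure ({m, n} : Set (ℤ × ℤ)) ∧
      T < Qn q := by
    obtain ⟨ν, hνZ, hνip, hνc, hνQ, hνL⟩ :
        ∃ ν, ν ∈ Z₀ ∧ 0 ≤ ip m ν ∧ cross m ν ≠ 0 ∧ Qn ν = Qn n ∧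
          ν ∈ AddSubgroup.closure ({m, n} : Set (ℤ × ℤ)) := by
      rcases le_or_gt 0 (ip m n) with h | h
      · exact ⟨n, hn, h, hcmn, rfl, hLn⟩
      · refine ⟨-n, hsymm n hn, ?_, ?_, Qn_neg n, neg_mem hLn⟩
        · rw [ip_neg_right]; linarith
        · rw [cross_neg_right]; exact neg_ne_zero.2 hcmn
    intro T
    have hν0 : ν ≠ 0 := fun h => h0 (by rw [hzz, ← h]; exact hνZ)
    have hνQ1 : 1 ≤ Qn ν := Qn_pos ν hν0
    have hm1 : 1 ≤ Qn m := Qn_pos m hm0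
    set t : ℤ := max T 1 with ht
    have ht1 : 1 ≤ t := le_max_right T 1
    have hTt : T ≤ t := le_max_left T 1
    have hray := hrayZ m ν ⟨0, by rw [hZ0]; exact hm⟩ hνZ hνc t (by linarith) ?_
    · refine ⟨m + sc t ν, hray.1, add_mem hLm (hLsc t ν hνL), ?_⟩
      rw [Qn_add_sc]
      have h1 : 0 ≤ 2 * t * ip m ν := by positivity
      nlinarith [sq_nonneg (t - 1)]
    · intro i hi0 hit
      rw [Qn_add_sc]
      rcases eq_or_lt_of_le hi0 with h | h
      · rw [← h]; simpa using (hνQ ▸ hnormQ)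
      · have h1 : 0 ≤ 2 * i * ip m ν := mul_nonneg (mul_nonneg (by norm_num) hi0) hνip
        have h2 : 1 ≤ i := h
        have h3 : Qn ν ≤ i ^ 2 * Qn ν := by nlinarith [mul_nonneg (mul_nonneg (by linarith : (0:ℤ) ≤ i - 1) (by linarith : (0:ℤ) ≤ i + 1)) (Qn_nonneg ν)]
        have : Qn ν < Qn m + 2 * i * ip m ν + i ^ 2 * Qn ν := by linarith
        exact this.ne'
  -- induction step for cosets
  have hCstep : ∀ c : ℤ × ℤ,
      (∀ T : ℤ, ∃ q, (∃ N, q ∈ Z N) ∧ q - c ∈ AddSubgroup.closure ({m, n} : Set (ℤ × ℤ)) ∧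
        T < Qn q) →
      ∀ j ∈ Z₀, (∀ T : ℤ, ∃ q, (∃ N, q ∈ Z N) ∧
        q - (j + c) ∈ AddSubgroup.closure ({m, n} : Set (ℤ × ℤ)) ∧ T < Qn q) := by
    intro c hc j hj T
    set T' : ℤ := max T NB with hT'
    have hT'T : T ≤ T' := le_max_left T NB
    have hT'NB : NB ≤ T' := le_max_right T NB
    have hT'0 : 0 ≤ T' := by linarith
    obtain ⟨q, hqR, hqL, hqQ⟩ := hc (2 * T' + 8 * NB + 1)
    have hq0 : q ≠ 0 := hRne q hqR
    have hj0 : j ≠ 0 := fun h => h0 (by rw [hzz, ← h]; exact hj)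
    have hQj : Qn j ≤ NB := hNBb j hj
    have hfar : NB < Qn q := by linarith
    have h8 : (0:ℤ) ≤ 4 * NB := by linarith
    by_cases hcqj : cross q j = 0
    · -- detour: first move by w, then by j
      obtain ⟨w, hwZ, hwL, hwc, hwQ⟩ :
          ∃ w, w ∈ Z₀ ∧ w ∈ AddSubgroup.closure ({m, n} : Set (ℤ × ℤ)) ∧
            cross q w ≠ 0 ∧ Qn w ≤ NB := by
        by_cases hqm : cross q m = 0
        · have hqn : cross q n ≠ 0 := fun h => notboth m n q hpar hq0 hqm h
          exact ⟨n, hn, hLn, hqn, hQn⟩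
        · exact ⟨m, hm, hLm, hqm, hQm⟩
      have hs1 := hstep q w hqR hwZ hwc (by
        have : Qn w < Qn q := by linarith
        exact this.ne')
      have hqw : ∃ N, q + w ∈ Z N := hR'R _ hs1
      have hwj : cross w j ≠ 0 := parallel_trans q j w hj0 hcqj hwc
      have hc2 : cross (q + w) j ≠ 0 := by
        rw [cross_add_left, hcqj, zero_add]; exact hwj
      have hqwQ : NB < Qn (q + w) := by
        apply normlb q w NB (4 * NB) (by linarith) h8 (by linarith) (by linarith)
      have hs2 := hstep (q + w) j hqw hj hc2 (by
        have : Qn j < Qn (q + w) := by linarith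
        exact this.ne')
      refine ⟨q + w + j, hR'R _ hs2, ?_, ?_⟩
      · have heq : q + w + j - (j + c) = (q - c) + w := by abel
        rw [heq]
        exact add_mem hqL hwL
      · have hWj : Qn (w + j) ≤ 4 * NB := by
          have := Qn_add_le w j
          linarith
        have heq : q + w + j = q + (w + j) := by abel
        rw [heq]
        have := normlb q (w + j) T' (4 * NB) hT'0 h8 (by linarith) hWj
        linarith
    · -- direct step
      have hs1 := hstep q j hqR hj hcqj (by
        have : Qn j < Qn q := by linarith
        exact this.ne')
      refine ⟨q + j, hR'R _ hs1, ?_, ?_⟩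
      · have heq : q + j - (j + c) = q - c := by abel
        rw [heq]; exact hqL
      · have := normlb q j T' (4 * NB) hT'0 h8 (by linarith) (by linarith)
        linarith
  -- all cosets contain far reachable points
  have hCall : ∀ c : ℤ × ℤ, ∀ T : ℤ, ∃ q, (∃ N, q ∈ Z N) ∧
      q - c ∈ AddSubgroup.closure ({m, n} : Set (ℤ × ℤ)) ∧ T < Qn q := by
    have hlist : ∀ l : List (ℤ × ℤ), (∀ y ∈ l, y ∈ Z₀) → ∀ T : ℤ, ∃ q, (∃ N, q ∈ Z N) ∧
        q - l.sum ∈ AddSubgroup.closure ({m, n} : Set (ℤ × ℤ)) ∧ T < Qn q := by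
      intro l
      induction l with
      | nil =>
          intro _ T
          obtain ⟨q, h1, h2, h3⟩ := hC0 T
          refine ⟨q, h1, ?_, h3⟩
          simpa [List.sum_nil, sub_zero] using h2
      | cons a l ih =>
          intro hmem T
          have ha : a ∈ Z₀ := hmem a (List.mem_cons_self)
          have htail := ih (fun y hy => hmem y (List.mem_cons_of_mem a hy))
          obtain ⟨q, h1, h2, h3⟩ := hCstep l.sum htail a ha T
          refine ⟨q, h1, ?_, h3⟩
          rw [List.sum_cons]
          exact h2
    intro c T
    have hc : c ∈ AddSubgroup.closure Z₀ := by rw [hgen]; exact AddSubgroup.mem_top c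
    obtain ⟨l, hl, hsum⟩ := exists_list_of_mem Z₀ hsymm c hc
    obtain ⟨q, h1, h2, h3⟩ := hlist l hl T
    exact ⟨q, h1, by rwa [hsum] at h2, h3⟩
  -- MAIN: every nonzero p not parallel to m nor n is in the union
  have hmain : ∀ p : ℤ × ℤ, p ≠ 0 → cross p m ≠ 0 → cross p n ≠ 0 →
      ∃ N, p ∈ Z (N + 1) := by
    intro p hp0 hpm hpn
    have hQp1 : 1 ≤ Qn p := Qn_pos p hp0
    obtain ⟨q, hqR, hqL, hqQ⟩ := hCall p NB
    have hq0 : q ≠ 0 := hRne q hqR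
    -- decomposition of p - q in terms of m and n
    obtain ⟨α, β, hαβ⟩ := mem_span_pair m n (q - p) hqL
    have hα1 := congrArg Prod.fst hαβ
    have hα2 := congrArg Prod.snd hαβ
    simp only [sub_fst, sub_snd, add_fst, add_snd, sc] at hα1 hα2
    -- choose the pair (wq, wp)
    obtain ⟨wq, wp, hwqZ, hwpZ, hcqwq, hcpwp, hcww, hdec⟩ :
        ∃ wq wp : ℤ × ℤ, wq ∈ Z₀ ∧ wp ∈ Z₀ ∧ cross q wq ≠ 0 ∧ cross p wp ≠ 0 ∧
          cross wq wp ≠ 0 ∧ ∃ a b : ℤ, p = q + sc a wq + sc b wp := by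
      by_cases hqm : cross q m = 0
      · have hqn : cross q n ≠ 0 := fun h => notboth m n q hpar hq0 hqm h
        refine ⟨n, m, hn, hm, hqn, hpm, ?_, -β, -α, ?_⟩
        · rw [lpCrossAC]; exact neg_ne_zero.2 hcmn
        · apply Prod.ext <;> simp only [sc, add_fst, add_snd] <;> linarith
      · refine ⟨m, n, hm, hn, hqm, hpn, hcmn, -α, -β, ?_⟩
        apply Prod.ext <;> simp only [sc, add_fst, add_snd] <;> linarith
    -- choose sign for u (direction at q)
    obtain ⟨u, huZ, hcqu, hipqu, hcuwp, hdec2⟩ :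
        ∃ u, u ∈ Z₀ ∧ cross q u ≠ 0 ∧ 0 ≤ ip q u ∧ cross u wp ≠ 0 ∧
          ∃ a b : ℤ, p = q + sc a u + sc b wp := by
      obtain ⟨a, b, hab⟩ := hdec
      rcases le_or_gt 0 (ip q wq) with h | h
      · exact ⟨wq, hwqZ, hcqwq, h, hcww, a, b, hab⟩
      · refine ⟨-wq, hsymm _ hwqZ, ?_, ?_, ?_, -a, b, ?_⟩
        · rw [cross_neg_right]; exact neg_ne_zero.2 hcqwq
        · rw [ip_neg_right]; linarith
        · rw [cross_neg_left]; exact neg_ne_zero.2 hcww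
        · rw [hab]
          apply Prod.ext <;> simp only [sc, add_fst, add_snd, neg_fst, neg_snd] <;> ring
    -- choose sign for u' (direction at p)
    obtain ⟨u', hu'Z, hcpu', hippu', hcuu', a, b, hpq⟩ :
        ∃ u', u' ∈ Z₀ ∧ cross p u' ≠ 0 ∧ ip p u' ≤ 0 ∧ cross u u' ≠ 0 ∧
          ∃ a b : ℤ, p = q + sc a u + sc b u' := by
      obtain ⟨a, b, hab⟩ := hdec2
      rcases le_or_gt (ip p wp) 0 with h | h
      · exact ⟨wp, hwpZ, hcpwp, h, hcuwp, a, b, hab⟩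
      · refine ⟨-wp, hsymm _ hwpZ, ?_, ?_, ?_, a, -b, ?_⟩
        · rw [cross_neg_right]; exact neg_ne_zero.2 hcpwp
        · rw [ip_neg_right]; linarith
        · rw [cross_neg_right]; exact neg_ne_zero.2 hcuwp
        · rw [hab]
          apply Prod.ext <;> simp only [sc, add_fst, add_snd, neg_fst, neg_snd] <;> ring
    have hQu : Qn u ≤ NB := hNBb u huZ
    have hQu' : Qn u' ≤ NB := hNBb u' hu'Z
    have hu'0 : u' ≠ 0 := fun h => h0 (by rw [hzz, ← h]; exact hu'Z)
    have hQu'1 : 1 ≤ Qn u' := Qn_pos u' hu'0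
    have hcuu'1 : 1 ≤ |cross u u'| := Int.one_le_abs hcuu'
    -- the constants
    obtain ⟨s, hs_def⟩ : ∃ v : ℤ, v = |a| + NB + |cross q u'| + 1 := ⟨_, rfl⟩
    obtain ⟨T, hT_def⟩ : ∃ v : ℤ, v = |b| + NB + |cross q u| + 1 := ⟨_, rfl⟩
    have habs_a : a ≤ |a| := le_abs_self a
    have habs_b : b ≤ |b| := le_abs_self b
    have hnabs_b : -|b| ≤ b := neg_abs_le b
    have habs_cqu' : 0 ≤ |cross q u'| := abs_nonneg _
    have habs_cqu : 0 ≤ |cross q u| := abs_nonneg _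
    have habs_a0 : 0 ≤ |a| := abs_nonneg a
    have habs_b0 : 0 ≤ |b| := abs_nonneg b
    have hs0 : 0 ≤ s := by rw [hs_def]; linarith
    have hT0 : 0 ≤ T := by rw [hT_def]; linarith
    -- ray 1 : from q to X = q + s u
    have hray1 := hrayZ q u hqR huZ hcqu s hs0 (by
      intro i hi0 _
      rw [Qn_add_sc]
      have h1 : 0 ≤ 2 * i * ip q u := mul_nonneg (mul_nonneg (by norm_num) hi0) hipqu
      have h2 : 0 ≤ i ^ 2 * Qn u := mul_nonneg (sq_nonneg i) (Qn_nonneg u)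
      have : Qn u < Qn q + 2 * i * ip q u + i ^ 2 * Qn u := by linarith
      exact this.ne')
    obtain ⟨X, hX_def⟩ : ∃ v : ℤ × ℤ, v = q + sc s u := ⟨_, rfl⟩
    rw [← hX_def] at hray1
    have hXR : ∃ N, X ∈ Z N := hray1.1
    -- bound on cross X u'
    have hXc : cross X u' = cross q u' + s * cross u u' := by rw [hX_def]; exact cross_add_sc q s u u'
    have habsX : NB + 1 ≤ |cross X u'| := by
      have h2a : s ≤ |s * cross u u'| := by
        rw [abs_mul, abs_of_nonneg hs0]
        nlinarith
      have h3a : |s * cross u u'| ≤ |cross X u'| + |cross q u'| := by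
        have h := abs_add_le (cross X u') (-(cross q u'))
        rw [abs_neg] at h
        have heq : cross X u' + -(cross q u') = s * cross u u' := by rw [hXc]; ring
        rw [heq] at h
        exact h
      linarith [hs_def.ge, hs_def.le]
    have hXcne : cross X u' ≠ 0 := by
      intro h; rw [h, abs_zero] at habsX; linarith
    have hXcsq : (NB + 1) ^ 2 ≤ cross X u' ^ 2 := by
      have := pow_le_pow_left₀ (by linarith : (0:ℤ) ≤ NB + 1) habsX 2
      rwa [sq_abs] at this
    -- leg 1 : from X to X1 = X + T (-u')
    have hray2 := hrayZ X (-u') hXR (hsymm u' hu'Z) (by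
        rw [cross_neg_right]; exact neg_ne_zero.2 hXcne) T hT0 (by
      intro i hi0 hit
      have hcr : cross (X + sc i (-u')) u' = cross X u' := by
        rw [cross_add_sc, cross_neg_left, lpCrossSelf]; ring
      have h1 : NB < Qn (X + sc i (-u')) := by
        apply Qn_gt_of_cross _ u' NB hNB1 hQu'
        rw [hcr]; exact hXcsq
      rw [Qn_neg]
      exact (lt_of_le_of_lt hQu' h1).ne')
    obtain ⟨X1, hX1_def⟩ : ∃ v : ℤ × ℤ, v = X + sc T (-u') := ⟨_, rfl⟩
    rw [← hX1_def] at hray2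
    have hX1R : ∃ N, X1 ∈ Z N := hray2.1
    -- bound on cross X1 u
    have hX1c : cross X1 u = cross q u + T * cross u u' := by
      rw [hX1_def, cross_add_sc, hX_def, cross_add_sc, lpCrossSelf, cross_neg_left,
        lpCrossAC u' u]
      ring
    have habsX1 : NB + 1 ≤ |cross X1 u| := by
      have h2a : T ≤ |T * cross u u'| := by
        rw [abs_mul, abs_of_nonneg hT0]
        nlinarith
      have h3a : |T * cross u u'| ≤ |cross X1 u| + |cross q u| := by
        have h := abs_add_le (cross X1 u) (-(cross q u))
        rw [abs_neg] at h
        have heq : cross X1 u + -(cross q u) = T * cross u u' := by rw [hX1c]; ring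
        rw [heq] at h
        exact h
      linarith [hT_def.ge, hT_def.le]
    have hX1cne : cross X1 u ≠ 0 := by
      intro h; rw [h, abs_zero] at habsX1; linarith
    have hX1csq : (NB + 1) ^ 2 ≤ cross X1 u ^ 2 := by
      have := pow_le_pow_left₀ (by linarith : (0:ℤ) ≤ NB + 1) habsX1 2
      rwa [sq_abs] at this
    have hQnu : Qn u ≤ NB := hQu
    -- leg 2 : from X1 to Y = X1 + (s - a) (-u)
    have hsa0 : 0 ≤ s - a := by rw [hs_def]; linarith
    have hray3 := hrayZ X1 (-u) hX1R (hsymm u huZ) (by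
        rw [cross_neg_right]; exact neg_ne_zero.2 hX1cne) (s - a) hsa0 (by
      intro i hi0 hit
      have hcr : cross (X1 + sc i (-u)) u = cross X1 u := by
        rw [cross_add_sc, cross_neg_left, lpCrossSelf]; ring
      have h1 : NB < Qn (X1 + sc i (-u)) := by
        apply Qn_gt_of_cross _ u NB hNB1 hQnu
        rw [hcr]; exact hX1csq
      rw [Qn_neg]
      exact (lt_of_le_of_lt hQnu h1).ne')
    obtain ⟨Y, hY_def⟩ : ∃ v : ℤ × ℤ, v = X1 + sc (s - a) (-u) := ⟨_, rfl⟩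
    rw [← hY_def] at hray3
    have hYR : ∃ N, Y ∈ Z N := hray3.1
    -- identify Y as p - (b + T) u'
    have hYp : Y = p + sc (-(b + T)) u' := by
      rw [hY_def, hX1_def, hX_def, hpq]
      apply Prod.ext <;>
        simp only [sc, add_fst, add_snd, neg_fst, neg_snd] <;> ring
    obtain ⟨t3, ht3_def⟩ : ∃ v : ℤ, v = b + T := ⟨_, rfl⟩
    have ht31 : 1 ≤ t3 := by rw [ht3_def, hT_def]; linarith
    have hcY : cross Y u' ≠ 0 := by
      rw [hYp, cross_add_sc, lpCrossSelf, mul_zero, add_zero]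
      exact hcpu'
    have hray4 := hrayZ Y u' hYR hu'Z hcY t3 (by linarith) (by
      intro i hi0 hit
      have heqi : Y + sc i u' = p + sc (i - t3) u' := by
        rw [hYp, ht3_def]
        apply Prod.ext <;>
          simp only [sc, add_fst, add_snd] <;> ring
      rw [heqi, Qn_add_sc]
      have hz1 : i - t3 ≤ -1 := by linarith
      have hw0 : 0 ≤ -(ip p u') := by linarith
      have h1 : 0 ≤ 2 * (i - t3) * ip p u' := by
        have := mul_nonneg (mul_nonneg (by norm_num : (0:ℤ) ≤ 2)
          (by linarith : (0:ℤ) ≤ t3 - i)) hw0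
        nlinarith
      have h2 : 1 ≤ (i - t3) ^ 2 := by nlinarith
      have h3 : Qn u' ≤ (i - t3) ^ 2 * Qn u' := by
        nlinarith [mul_nonneg (by linarith : (0:ℤ) ≤ (i - t3) ^ 2 - 1) (Qn_nonneg u')]
      have : Qn u' < Qn p + 2 * (i - t3) * ip p u' + (i - t3) ^ 2 * Qn u' := by linarith
      exact this.ne')
    have hfin : Y + sc t3 u' = p := by
      rw [hYp, ht3_def]
      apply Prod.ext <;>
        simp only [sc, add_fst, add_snd] <;> ring
    have := hray4.2 ht31
    rwa [hfin] at this
  -- WRAP : handle points parallel to m or n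
  have hwrap : ∀ p : ℤ × ℤ, p ≠ 0 → ∃ N, p ∈ Z (N + 1) := by
    intro p hp0
    have hQp1 : 1 ≤ Qn p := Qn_pos p hp0
    by_cases hpm : cross p m = 0
    · -- p is parallel to m ; use steps ±n
      have hpn : cross p n ≠ 0 := fun h => notboth m n p hpar hp0 hpm h
      have hQpn : Qn (p - n) = Qn p - 2 * (ip p n) + Qn n := by
        rw [sub_eq_add_neg, Qn_add, ip_neg_right, Qn_neg]; ring
      have hQpn' : Qn (p + n) = Qn p + 2 * (ip p n) + Qn n := by
        rw [Qn_add]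
      have hchoice : Qn (p - n) ≠ Qn n ∨ Qn (p + n) ≠ Qn n := by
        by_contra h
        push_neg at h
        obtain ⟨h1, h2⟩ := h
        rw [hQpn] at h1; rw [hQpn'] at h2
        linarith
      rcases hchoice with hQe | hQe
      · -- p' = p - n
        have hp'm : cross (p - n) m ≠ 0 := by
          rw [cross_sub_left, hpm, zero_sub]
          rw [lpCrossAC n m]
          simpa using hcmn
        have hp'n : cross (p - n) n ≠ 0 := by
          rw [cross_sub_left, lpCrossSelf, sub_zero]; exact hpn
        have hp'0 : p - n ≠ 0 := by
          intro h; exact hp'n (by rw [h, cross_zero_left])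
        have hmainp' := hmain (p - n) hp'0 hp'm hp'n
        have hstepf := hstep (p - n) n (hR'R _ hmainp') hn hp'n hQe
        rwa [sub_add_cancel] at hstepf
      · -- p' = p + n
        have hp'm : cross (p + n) m ≠ 0 := by
          rw [cross_add_left, hpm, zero_add]
          rw [lpCrossAC n m]
          simpa using hcmn
        have hp'n : cross (p + n) n ≠ 0 := by
          rw [cross_add_left, lpCrossSelf, add_zero]; exact hpn
        have hp'0 : p + n ≠ 0 := by
          intro h; exact hp'n (by rw [h, cross_zero_left])
        have hmainp' := hmain (p + n) hp'0 hp'm hp'n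
        have hcr : cross (p + n) (-n) ≠ 0 := by
          rw [cross_neg_right]; exact neg_ne_zero.2 hp'n
        have hQr : Qn (p + n) ≠ Qn (-n) := by rw [Qn_neg]; exact hQe
        have hstepf := hstep (p + n) (-n) (hR'R _ hmainp') (hsymm n hn) hcr hQr
        rwa [add_neg_cancel_right] at hstepf
    · by_cases hpn : cross p n = 0
      · -- p is parallel to n ; use steps ±m
        have hQpm : Qn (p - m) = Qn p - 2 * (ip p m) + Qn m := by
          rw [sub_eq_add_neg, Qn_add, ip_neg_right, Qn_neg]; ring
        have hQpm' : Qn (p + m) = Qn p + 2 * (ip p m) + Qn m := by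
          rw [Qn_add]
        have hchoice : Qn (p - m) ≠ Qn m ∨ Qn (p + m) ≠ Qn m := by
          by_contra h
          push_neg at h
          obtain ⟨h1, h2⟩ := h
          rw [hQpm] at h1; rw [hQpm'] at h2
          linarith
        rcases hchoice with hQe | hQe
        · have hp'n : cross (p - m) n ≠ 0 := by
            rw [cross_sub_left, hpn, zero_sub]
            simpa using hcmn
          have hp'm : cross (p - m) m ≠ 0 := by
            rw [cross_sub_left, lpCrossSelf, sub_zero]; exact hpm
          have hp'0 : p - m ≠ 0 := by
            intro h; exact hp'm (by rw [h, cross_zero_left])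
          have hmainp' := hmain (p - m) hp'0 hp'm hp'n
          have hstepf := hstep (p - m) m (hR'R _ hmainp') hm hp'm hQe
          rwa [sub_add_cancel] at hstepf
        · have hp'n : cross (p + m) n ≠ 0 := by
            rw [cross_add_left, hpn, zero_add]
            exact hcmn
          have hp'm : cross (p + m) m ≠ 0 := by
            rw [cross_add_left, lpCrossSelf, add_zero]; exact hpm
          have hp'0 : p + m ≠ 0 := by
            intro h; exact hp'm (by rw [h, cross_zero_left])
          have hmainp' := hmain (p + m) hp'0 hp'm hp'n
          have hcr : cross (p + m) (-m) ≠ 0 := by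
            rw [cross_neg_right]; exact neg_ne_zero.2 hp'm
          have hQr : Qn (p + m) ≠ Qn (-m) := by rw [Qn_neg]; exact hQe
          have hstepf := hstep (p + m) (-m) (hR'R _ hmainp') (hsymm m hm) hcr hQr
          rwa [add_neg_cancel_right] at hstepf
      · exact hmain p hp0 hpm hpn
  -- conclusion
  ext x
  simp only [Set.mem_iUnion, Set.mem_setOf_eq]
  constructor
  · rintro ⟨N, hx⟩
    have := hRne x ⟨N + 1, hx⟩
    simpa [hzz] using this
  · intro hx
    exact hwrap x (by simpa [hzz] using hx)
end
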